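/- arXiv:1009.5213 — 3 statements merged into one kernel-verified Lean document; each statement's English description precedes it below -/
import Mathlib

section
/- Consequently, for every Boolean function f : {0,1}ⁿ → {0,1} with f(0) = 0 there exist real angles φ_a, indexed by the 2ⁿ − 1 nonzero strings a ∈ {0,1}ⁿ, such that exp(i · Σ_{a≠0} (a·x mod 2) φ_a) = (−1)^{f(x)} for all x ∈ {0,1}ⁿ. -/
open Finset

lemma zm_cases (u : ZMod 2) : u = 0 ∨ u = 1 := by revert u; decide

lemma val01 : ((0:ZMod 2).val = 0) ∧ ((1:ZMod 2).val = 1) ∧ (((0:ZMod 2)+0).val = 0)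
    ∧ (((0:ZMod 2)+1).val = 1) ∧ (((1:ZMod 2)+0).val = 1) ∧ (((1:ZMod 2)+1).val = 0) := by
  decide

lemma sgn_add (u v : ZMod 2) : ((-1:ℝ))^((u+v).val) = (-1)^u.val * (-1)^v.val := by
  obtain ⟨h1,h2,h3,h4,h5,h6⟩ := val01
  rcases zm_cases u with hu | hu <;> rcases zm_cases v with hv | hv <;>
    subst hu <;> subst hv <;> simp [h1,h2,h3,h4,h5,h6]

lemma val_real (u : ZMod 2) : ((u.val : ℕ) : ℝ) = (1 - (-1)^u.val)/2 := by
  obtain ⟨h1,h2,-⟩ := val01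
  rcases zm_cases u with hu | hu <;> subst hu <;> simp [h1,h2] <;> norm_num

lemma ip_add (n : ℕ) (a x y : Fin n → ZMod 2) :
    (∑ j, a j * (x + y) j) = (∑ j, a j * x j) + (∑ j, a j * y j) := by
  rw [← Finset.sum_add_distrib]
  exact Finset.sum_congr rfl fun j _ => by simp [mul_add]

lemma orth (n : ℕ) (z : Fin n → ZMod 2) :
    ∑ a : Fin n → ZMod 2, ((-1:ℝ))^((∑ j, a j * z j).val) =
      if z = 0 then (2:ℝ)^n else 0 := by
  split_ifs with h
  · subst h
    have : ∀ a : Fin n → ZMod 2, ((-1:ℝ))^((∑ j, a j * (0 : Fin n → ZMod 2) j).val) = 1 := by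
      intro a; simp [val01.1]
    rw [Finset.sum_congr rfl (fun a _ => this a)]
    simp [Finset.card_univ]
  · obtain ⟨j, hj⟩ : ∃ j, z j ≠ 0 := by
      by_contra h'; push_neg at h'; exact h (funext h')
    have hz1 : z j = 1 := (zm_cases (z j)).resolve_left hj
    apply Finset.sum_ninvolution (fun a => a + (Pi.single j 1 : Fin n → ZMod 2))
    · intro a
      have hip : (∑ j', (a + (Pi.single j 1 : Fin n → ZMod 2)) j' * z j') = (∑ j', a j' * z j') + 1 := by
        rw [show (∑ j', (a + (Pi.single j 1 : Fin n → ZMod 2)) j' * z j')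
            = (∑ j', a j' * z j') + (∑ j', (Pi.single j 1 : Fin n → ZMod 2) j' * z j') by
          rw [← Finset.sum_add_distrib]; exact Finset.sum_congr rfl fun i _ => by
            simp [add_mul]]
        congr 1
        rw [Finset.sum_eq_single j]
        · simp [hz1]
        · intro b _ hb; simp [Pi.single_eq_of_ne hb]
        · simp
      rw [hip, sgn_add]
      simp [val01.2.1]
    · intro a ha hc
      apply ha
      have := congrFun hc j
      simp at this
    · intro a; exact Finset.mem_univ _
    · intro a
      funext i
      by_cases hi : i = j
      · subst hi; simp
        have : (1 : ZMod 2) + 1 = 0 := by decide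
        rw [add_assoc, this, add_zero]
      · simp [Pi.single_eq_of_ne hi]

lemma add_eq_zero_iff_zm (u v : ZMod 2) : u + v = 0 ↔ v = u := by revert u v; decide

lemma key (n : ℕ) (g : (Fin n → ZMod 2) → ℝ) (hg : g 0 = 0) :
    ∃ φ : (Fin n → ZMod 2) → ℝ,
      ∀ x, ∑ a ∈ Finset.univ.filter (fun a : Fin n → ZMod 2 => a ≠ 0),
          (((∑ j, a j * x j).val : ℕ) : ℝ) * φ a = g x := by
  have hcne : (2:ℝ)^n ≠ 0 := by positivity
  refine ⟨fun a => -(2 / (2:ℝ)^n) * ∑ y, g y * (-1)^((∑ j, a j * y j).val), fun x => ?_⟩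
  rw [Finset.sum_filter_of_ne]
  swap
  · intro a _ hne ha0
    apply hne; subst ha0
    have : (∑ j, (0 : Fin n → ZMod 2) j * x j) = 0 := by simp
    rw [this, val01.1]
    simp
  have step1 : ∀ a : Fin n → ZMod 2,
      (((∑ j, a j * x j).val : ℕ) : ℝ)
          * (-(2 / (2:ℝ)^n) * ∑ y, g y * (-1)^((∑ j, a j * y j).val))
      = ∑ y, (-(1/(2:ℝ)^n)) * g y * ((-1:ℝ)^((∑ j, a j * y j).val)
          - (-1:ℝ)^((∑ j, a j * (x + y) j).val)) := by
    intro a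
    rw [val_real, Finset.mul_sum, Finset.mul_sum]
    apply Finset.sum_congr rfl
    intro y _
    rw [ip_add n a x y, sgn_add]
    ring
  rw [Finset.sum_congr rfl (fun a _ => step1 a), Finset.sum_comm]
  have step2 : ∀ y : Fin n → ZMod 2,
      (∑ a : Fin n → ZMod 2, (-(1/(2:ℝ)^n)) * g y * ((-1:ℝ)^((∑ j, a j * y j).val)
          - (-1:ℝ)^((∑ j, a j * (x + y) j).val)))
      = (if y = 0 then (-(1/(2:ℝ)^n)) * g y * (2:ℝ)^n else 0)
        - (if y = x then (-(1/(2:ℝ)^n)) * g y * (2:ℝ)^n else 0) := by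
    intro y
    rw [← Finset.mul_sum, Finset.sum_sub_distrib, orth n y, orth n (x + y)]
    have hxy : (x + y = 0) ↔ (y = x) := by
      constructor
      · intro h; funext i
        exact (add_eq_zero_iff_zm (x i) (y i)).mp (congrFun h i)
      · intro h; subst h; funext i
        exact (add_eq_zero_iff_zm (y i) (y i)).mpr rfl
    rw [if_congr hxy rfl rfl]
    split_ifs <;> ring
  rw [Finset.sum_congr rfl (fun y _ => step2 y), Finset.sum_sub_distrib,
    Finset.sum_ite_eq' Finset.univ (0 : Fin n → ZMod 2),
    Finset.sum_ite_eq' Finset.univ x]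
  simp [hg]
  field_simp

theorem stmt_5 (n : ℕ) (f : (Fin n → ZMod 2) → ZMod 2) (hf : f 0 = 0) :
    ∃ φ : (Fin n → ZMod 2) → ℝ,
      ∀ x : Fin n → ZMod 2,
        Complex.exp (Complex.I *
            (∑ a ∈ Finset.univ.filter (fun a : Fin n → ZMod 2 => a ≠ 0),
              (((∑ j, a j * x j).val : ℝ) : ℂ) * (φ a : ℂ))) =
          (-1 : ℂ) ^ ((f x).val) := by
  obtain ⟨φ, hφ⟩ := key n (fun x => Real.pi * ((f x).val : ℝ))
    (by show Real.pi * ((f 0).val : ℝ) = 0; rw [show f 0 = 0 from hf, val01.1]; simp)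
  refine ⟨φ, fun x => ?_⟩
  have hsum : (∑ a ∈ Finset.univ.filter (fun a : Fin n → ZMod 2 => a ≠ 0),
      (((∑ j, a j * x j).val : ℝ) : ℂ) * (φ a : ℂ))
      = ((Real.pi * ((f x).val : ℝ) : ℝ) : ℂ) := by
    rw [← hφ x]
    push_cast
    rfl
  rw [hsum]
  push_cast
  rw [show Complex.I * ((Real.pi : ℂ) * ((f x).val : ℂ))
      = ((f x).val : ℂ) * ((Real.pi : ℂ) * Complex.I) by ring]
  rw [Complex.exp_nat_mul, Complex.exp_pi_mul_I]
end

section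
/- For n ≥ 2, and for any choice of 'local' functions m₁,…,mₙ with each mⱼ : {0,1} → {0,1}, the number of inputs s ∈ {0,1}ⁿ for which ⊕ⱼ mⱼ(sⱼ) = ∏ⱼ sⱼ is at most 2ⁿ − 1; moreover the bound 2ⁿ − 1 is attained (e.g. by all mⱼ constantly 0). -/
theorem stmt_11 (n : ℕ) (hn : 2 ≤ n) :
    (∀ m : Fin n → ZMod 2 → ZMod 2,
        (Finset.univ.filter (fun s : Fin n → ZMod 2 =>
          (∑ j, m j (s j)) = ∏ j, s j)).card ≤ 2 ^ n - 1) ∧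
      ∃ m : Fin n → ZMod 2 → ZMod 2,
        (Finset.univ.filter (fun s : Fin n → ZMod 2 =>
          (∑ j, m j (s j)) = ∏ j, s j)).card = 2 ^ n - 1 := by
  have hcard : Fintype.card (Fin n → ZMod 2) = 2 ^ n := by
    simp [Fintype.card_fun]
  constructor
  · intro m
    set i0 : Fin n := ⟨0, by omega⟩
    set i1 : Fin n := ⟨1, by omega⟩
    have hne : i0 ≠ i1 := by simp [i0, i1, Fin.ext_iff]
    set s1 : Fin n → ZMod 2 := fun _ => 1 with hs1
    set S : ZMod 2 := ∑ j, m j 1 with hS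
    -- sums at updated points
    have sumA : ∀ i : Fin n, (∑ j, m j (Function.update s1 i 0 j))
        = S - m i 1 + m i 0 := by
      intro i
      have hf : (fun j => m j (Function.update s1 i 0 j))
          = Function.update (fun j => m j 1) i (m i 0) := by
        funext j
        by_cases h : j = i <;> simp [h, Function.update, s1]
      rw [hf, Finset.sum_update_of_mem (Finset.mem_univ i),
        Finset.sdiff_singleton_eq_erase,
        Finset.sum_erase_eq_sub (Finset.mem_univ i)]
      ring
    have sumAB : (∑ j, m j (Function.update (Function.update s1 i0 0) i1 0 j))
        = S - m i0 1 - m i1 1 + m i0 0 + m i1 0 := by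
      have hf : (fun j => m j (Function.update (Function.update s1 i0 0) i1 0 j))
          = Function.update (Function.update (fun j => m j 1) i0 (m i0 0)) i1 (m i1 0) := by
        funext j
        by_cases h1 : j = i1
        · simp [h1, Function.update]
        · by_cases h0 : j = i0 <;> simp [h0, h1, Function.update, s1, hne, if_neg hne]
      rw [hf, Finset.sum_update_of_mem (Finset.mem_univ i1),
        Finset.sdiff_singleton_eq_erase,
        Finset.sum_update_of_mem (Finset.mem_erase.mpr ⟨hne, Finset.mem_univ i0⟩),
        Finset.sdiff_singleton_eq_erase,
        Finset.sum_erase_eq_sub (Finset.mem_erase.mpr ⟨hne, Finset.mem_univ i0⟩),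
        Finset.sum_erase_eq_sub (Finset.mem_univ i1)]
      ring
    -- products
    have prod1 : (∏ j, s1 j) = 1 := by simp [s1]
    have prodA : ∀ i : Fin n, (∏ j, Function.update s1 i 0 j) = 0 := by
      intro i
      apply Finset.prod_eq_zero (Finset.mem_univ i)
      simp [Function.update]
    have prodAB : (∏ j, Function.update (Function.update s1 i0 0) i1 0 j) = 0 := by
      apply Finset.prod_eq_zero (Finset.mem_univ i1)
      simp [Function.update]
    -- it suffices that some s fails
    by_contra hlt
    push_neg at hlt
    have hle : (Finset.univ.filter (fun s : Fin n → ZMod 2 =>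
        (∑ j, m j (s j)) = ∏ j, s j)).card ≤ 2 ^ n := by
      calc _ ≤ Finset.univ.card := Finset.card_filter_le _ _
        _ = 2 ^ n := by rw [Finset.card_univ, hcard]
    have heq : (Finset.univ.filter (fun s : Fin n → ZMod 2 =>
        (∑ j, m j (s j)) = ∏ j, s j)).card = 2 ^ n := by
      refine Nat.le_antisymm hle ?_
      have : Nat.succ (2 ^ n - 1) = 2 ^ n :=
        Nat.succ_pred_eq_of_pos (by positivity : 0 < 2 ^ n)
      exact this ▸ Nat.succ_le_of_lt hlt
    have hall : ∀ s : Fin n → ZMod 2, (∑ j, m j (s j)) = ∏ j, s j := by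
      intro s
      have := Finset.eq_univ_of_card (Finset.univ.filter (fun s : Fin n → ZMod 2 =>
          (∑ j, m j (s j)) = ∏ j, s j)) (by rw [heq, hcard])
      have hmem : s ∈ Finset.univ.filter (fun s : Fin n → ZMod 2 =>
          (∑ j, m j (s j)) = ∏ j, s j) := by rw [this]; exact Finset.mem_univ s
      exact (Finset.mem_filter.mp hmem).2
    have h1 : S = 1 := by have := hall s1; rwa [prod1] at this
    have hA := hall (Function.update s1 i0 0)
    rw [sumA i0, prodA i0] at hA
    have hB := hall (Function.update s1 i1 0)
    rw [sumA i1, prodA i1] at hB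
    have hAB := hall (Function.update (Function.update s1 i0 0) i1 0)
    rw [sumAB, prodAB] at hAB
    have hcontr : (1 : ZMod 2) = 0 := by
      linear_combination hA + hB - hAB - h1
    exact one_ne_zero hcontr
  · refine ⟨fun _ _ => 0, ?_⟩
    have hsplit := Finset.card_filter_add_card_filter_not
      (s := (Finset.univ : Finset (Fin n → ZMod 2)))
      (p := fun s : Fin n → ZMod 2 => (∑ _j : Fin n, (0 : ZMod 2)) = ∏ j, s j)
    have hneg : (Finset.univ.filter (fun s : Fin n → ZMod 2 =>
        ¬ ((∑ _j : Fin n, (0 : ZMod 2)) = ∏ j, s j))) = {fun _ => 1} := by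
      ext s
      simp only [Finset.mem_filter, Finset.mem_univ, true_and, Finset.mem_singleton,
        Finset.sum_const_zero]
      constructor
      · intro h
        have hcases : ∀ j : Fin n, s j = 1 := by
          intro j
          have : s j ≠ 0 := fun h0 => h (Finset.prod_eq_zero (Finset.mem_univ j) h0).symm
          have hx : ∀ x : ZMod 2, x = 0 ∨ x = 1 := by decide
          rcases hx (s j) with h0 | h1
          · exact absurd h0 this
          · exact h1
        funext j; exact hcases j
      · intro h; subst h; simp
    rw [hneg] at hsplit
    simp only [Finset.card_singleton, Finset.card_univ, hcard] at hsplit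
    exact Nat.eq_sub_of_add_eq hsplit
end

section
/- Let n ≥ 8 and φ₁,…,φₙ ∈ (−π, π). Then |2ⁿ·∏ₖ cos(φₖ/2) − 2·exp(i·Σₖ φₖ/2)| ≤ 2ⁿ − 2. -/
open Finset in
lemma aux_abs_sin_sum {ι : Type*} (s : Finset ι) (f : ι → ℝ) :
    |Real.sin (∑ i ∈ s, f i)| ≤ ∑ i ∈ s, |Real.sin (f i)| := by
  induction s using Finset.cons_induction with
  | empty => simp
  | cons a s ha ih =>
    rw [Finset.sum_cons, Finset.sum_cons, Real.sin_add]
    refine le_trans (abs_add_le _ _) ?_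
    have h1 : |Real.sin (f a) * Real.cos (∑ i ∈ s, f i)| ≤ |Real.sin (f a)| := by
      rw [abs_mul]
      exact mul_le_of_le_one_right (abs_nonneg _) (Real.abs_cos_le_one _)
    have h2 : |Real.cos (f a) * Real.sin (∑ i ∈ s, f i)| ≤ |Real.sin (∑ i ∈ s, f i)| := by
      rw [abs_mul]
      exact mul_le_of_le_one_left (abs_nonneg _) (Real.abs_cos_le_one _)
    have := le_trans h2 ih
    linarith

open Finset in
lemma aux_one_add_sum_le_prod {ι : Type*} (s : Finset ι) (f : ι → ℝ)
    (hf : ∀ i ∈ s, 0 ≤ f i) :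
    1 + ∑ i ∈ s, f i ≤ ∏ i ∈ s, (1 + f i) := by
  induction s using Finset.cons_induction with
  | empty => simp
  | cons a s ha ih =>
    rw [Finset.sum_cons, Finset.prod_cons]
    have hfa : 0 ≤ f a := hf a (Finset.mem_cons_self a s)
    have hsum : 0 ≤ ∑ i ∈ s, f i :=
      Finset.sum_nonneg fun i hi => hf i (Finset.mem_cons_of_mem hi)
    have ih' := ih fun i hi => hf i (Finset.mem_cons_of_mem hi)
    nlinarith

lemma aux_nat_pow (n : ℕ) (hn : 8 ≤ n) : (n : ℝ) + 1 ≤ 2 ^ (n - 2) := by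
  have h : n + 1 ≤ 2 ^ (n - 2) := by
    induction n, hn using Nat.le_induction with
    | base => norm_num
    | succ m hm ih =>
      have h2 : m + 1 - 2 = (m - 2) + 1 := by omega
      rw [h2, pow_succ]
      omega
  calc (n : ℝ) + 1 = ((n + 1 : ℕ) : ℝ) := by push_cast; ring
    _ ≤ ((2 ^ (n - 2) : ℕ) : ℝ) := by exact_mod_cast Nat.cast_le.mpr h
    _ = 2 ^ (n - 2) := by push_cast; ring

theorem stmt_14 (n : ℕ) (hn : 8 ≤ n) (φ : Fin n → ℝ)
    (hφ : ∀ k, φ k ∈ Set.Ioo (-Real.pi) Real.pi) :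
    ‖(2 : ℂ) ^ n * ((∏ k, Real.cos (φ k / 2) : ℝ) : ℂ) -
        2 * Complex.exp (Complex.I * ((∑ k, φ k / 2 : ℝ) : ℂ))‖ ≤
      2 ^ n - 2 := by
  set P : ℝ := ∏ k, Real.cos (φ k / 2) with hPdef
  set S : ℝ := ∑ k, φ k / 2 with hSdef
  have hπ := Real.pi_pos
  have hck : ∀ k, 0 < Real.cos (φ k / 2) := by
    intro k
    apply Real.cos_pos_of_mem_Ioo
    obtain ⟨h1, h2⟩ := hφ k
    constructor <;> [linarith; linarith]
  have hck1 : ∀ k, Real.cos (φ k / 2) ≤ 1 := fun k => Real.cos_le_one _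
  have hP0 : 0 < P := Finset.prod_pos fun k _ => hck k
  have hP1 : P ≤ 1 :=
    Finset.prod_le_one (fun k _ => (hck k).le) (fun k _ => hck1 k)
  -- Step C : P * ∑ (1 - c k) ≤ 1 - P
  have hC : P * (∑ k, (1 - Real.cos (φ k / 2))) ≤ 1 - P := by
    have h1 : 1 + ∑ k, (1 - Real.cos (φ k / 2)) ≤ ∏ k, (2 - Real.cos (φ k / 2)) := by
      have := aux_one_add_sum_le_prod Finset.univ
        (fun k => 1 - Real.cos (φ k / 2)) (fun k _ => by linarith [hck1 k])
      convert this using 2 with k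
      ring
    have h2 : P * ∏ k, (2 - Real.cos (φ k / 2)) ≤ 1 := by
      rw [hPdef, ← Finset.prod_mul_distrib]
      apply Finset.prod_le_one
      · intro k _
        have := hck k; have := hck1 k
        nlinarith
      · intro k _
        have := hck k; have := hck1 k
        nlinarith
    nlinarith [Finset.sum_nonneg (fun k (_ : k ∈ Finset.univ) =>
      (by linarith [hck1 k] : (0:ℝ) ≤ 1 - Real.cos (φ k / 2)))]
  -- Step A : sin(S/2)^2 ≤ n * ∑ sin(φ k / 4)^2
  have hA : Real.sin (S / 2) ^ 2 ≤ (n : ℝ) * ∑ k, Real.sin (φ k / 4) ^ 2 := by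
    have hS2 : S / 2 = ∑ k, φ k / 4 := by
      rw [hSdef, Finset.sum_div]
      apply Finset.sum_congr rfl
      intro k _
      ring
    have h1 : |Real.sin (S / 2)| ≤ ∑ k, |Real.sin (φ k / 4)| := by
      rw [hS2]
      exact aux_abs_sin_sum _ _
    have h2 : (∑ k, |Real.sin (φ k / 4)|) ^ 2 ≤
        (n : ℝ) * ∑ k, |Real.sin (φ k / 4)| ^ 2 := by
      have := sq_sum_le_card_mul_sum_sq (s := (Finset.univ : Finset (Fin n)))
        (f := fun k => |Real.sin (φ k / 4)|)
      simpa using this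
    have h3 : Real.sin (S / 2) ^ 2 ≤ (∑ k, |Real.sin (φ k / 4)|) ^ 2 := by
      rw [← sq_abs]
      exact pow_le_pow_left₀ (abs_nonneg _) h1 2
    calc Real.sin (S / 2) ^ 2 ≤ (∑ k, |Real.sin (φ k / 4)|) ^ 2 := h3
      _ ≤ (n : ℝ) * ∑ k, |Real.sin (φ k / 4)| ^ 2 := h2
      _ = (n : ℝ) * ∑ k, Real.sin (φ k / 4) ^ 2 := by
          congr 1
          exact Finset.sum_congr rfl fun k _ => sq_abs _
  -- Step B : ∑ sin(φ k/4)^2 = (∑ (1 - cos(φ k/2)))/2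
  have hB : ∑ k, Real.sin (φ k / 4) ^ 2 = (∑ k, (1 - Real.cos (φ k / 2))) / 2 := by
    rw [Finset.sum_div]
    apply Finset.sum_congr rfl
    intro k _
    have := Real.sin_sq_eq_half_sub (φ k / 4)
    have h4 : 2 * (φ k / 4) = φ k / 2 := by ring
    rw [h4] at this
    linarith
  -- sin(S/2)^2 relation to cos S
  have hcosS : Real.cos S = 1 - 2 * Real.sin (S / 2) ^ 2 := by
    have := Real.sin_sq_eq_half_sub (S / 2)
    have h4 : 2 * (S / 2) = S := by ring
    rw [h4] at this
    linarith
  -- Key inequality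
  have hkey : 1 - P * Real.cos S ≤ (2:ℝ) ^ (n - 2) * (1 - P ^ 2) := by
    have h5 : P * (2 * Real.sin (S / 2) ^ 2) ≤ (n : ℝ) * (1 - P) := by
      have h6 : Real.sin (S / 2) ^ 2 ≤
          (n : ℝ) * ((∑ k, (1 - Real.cos (φ k / 2))) / 2) := by
        rw [← hB]; exact hA
      have hn0 : (0 : ℝ) ≤ n := Nat.cast_nonneg n
      nlinarith [hC, hP0.le]
    have h7 : 1 - P * Real.cos S ≤ ((n : ℝ) + 1) * (1 - P) := by
      rw [hcosS]
      nlinarith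
    have h8 : ((n : ℝ) + 1) * (1 - P) ≤ (2:ℝ) ^ (n - 2) * (1 - P) := by
      apply mul_le_mul_of_nonneg_right (aux_nat_pow n hn)
      linarith
    have h9 : (2:ℝ) ^ (n - 2) * (1 - P) ≤ (2:ℝ) ^ (n - 2) * (1 - P ^ 2) := by
      apply mul_le_mul_of_nonneg_left _ (by positivity)
      nlinarith
    linarith
  -- Now the complex computation
  have hz : (2 : ℂ) ^ n * ((P : ℝ) : ℂ) - 2 * Complex.exp (Complex.I * ((S : ℝ) : ℂ)) =
      (((2:ℝ) ^ n * P - 2 * Real.cos S : ℝ) : ℂ) +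
        ((-(2 * Real.sin S) : ℝ) : ℂ) * Complex.I := by
    rw [mul_comm Complex.I, Complex.exp_mul_I, ← Complex.ofReal_cos, ← Complex.ofReal_sin]
    push_cast
    ring
  rw [hz, Complex.norm_def, Complex.normSq_add_mul_I]
  have hrhs : (0:ℝ) ≤ 2 ^ n - 2 := by
    have : (2:ℝ) ^ 8 ≤ 2 ^ n := pow_le_pow_right₀ (by norm_num) hn
    norm_num at this ⊢
    linarith
  rw [show ((2:ℝ)^n - 2) = Real.sqrt (((2:ℝ)^n - 2)^2) from (Real.sqrt_sq hrhs).symm]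
  apply Real.sqrt_le_sqrt
  -- final algebra
  have hA4B : (2:ℝ) ^ n = 4 * 2 ^ (n - 2) := by
    rw [show (2:ℝ) ^ n = 2 ^ ((n - 2) + 2) by congr 1; omega, pow_add]
    ring
  have hpyth := Real.sin_sq_add_cos_sq S
  have hBpos : (0:ℝ) < (2:ℝ) ^ (n - 2) := by positivity
  rw [hA4B]
  nlinarith [mul_le_mul_of_nonneg_left hkey hBpos.le, hpyth]
end
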